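/- Fix an integer M ≥ 1 and real numbers r_min ≤ r_max, and set ρ_min = M·r_min + 1 and ρ_max = M·r_max + 1. Let f₁ = 30x₂ − 30x₁, f₂ = 3Mx₁r − 3Mx₁x₃ − 3x₂ + 3x₁, f₃ = 3Mx₁x₂ − 8x₃, regarded as polynomials in ℝ[x₁,x₂,x₃,r]. Suppose there exist polynomials V, b₁, …, b_{m₂} ∈ ℝ[x₁,x₂,x₃,r] and s, a₁, …, a_{m₁} ∈ ℝ[x₁,x₂,x₃], and real symmetric positive semidefinite matrices Q (of size m₁ × m₁) and R (of size m₂ × m₂), such that the polynomial identities s = aᵀQa and f₁·∂V/∂x₁ + f₂·∂V/∂x₂ + f₃·∂V/∂x₃ − (x₂ − x₁)² − M²(r − r_min)(r_max − r)·s = bᵀRb hold in ℝ[x₁,x₂,x₃,r]. Then for every ρ with ρ_min ≤ ρ ≤ ρ_max, the Lorenz system with σ = 10 and β = 8/3 is globally stable: every global solution x : ℝ → ℝ³ satisfies dist(x(t), E_ρ) → 0 as t → ∞, where E_ρ is the set of stationary points of the Lorenz vector field with parameters σ = 10, β = 8/3, ρ. -/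

import Mathlib

open Filter Topology MvPolynomial


private lemma incr_le {f f' : ℝ → ℝ} {A B c : ℝ} (hAB : A ≤ B)
    (hf : ∀ t ∈ Set.Icc A B, HasDerivAt f (f' t) t)
    (hc : ∀ t ∈ Set.Icc A B, f' t ≤ c) : f B - f A ≤ c * (B - A) := by
  have hg : ∀ t ∈ Set.Icc A B, HasDerivAt (fun u => c * u - f u) (c - f' t) t := by
    intro t ht
    have := ((hasDerivAt_id t).const_mul c).sub (hf t ht)
    simpa [Pi.sub_def] using this
  have mono : MonotoneOn (fun u => c * u - f u) (Set.Icc A B) := by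
    apply monotoneOn_of_deriv_nonneg (convex_Icc A B)
    · exact fun t ht => ((hg t ht).continuousAt).continuousWithinAt
    · exact fun t ht =>
        ((hg t (interior_subset ht)).differentiableAt).differentiableWithinAt
    · intro t ht
      rw [(hg t (interior_subset ht)).deriv]
      have := hc t (interior_subset ht); linarith
  have h2 := mono (Set.left_mem_Icc.2 hAB) (Set.right_mem_Icc.2 hAB) hAB
  simp only at h2; linarith

private lemma incr_ge {f f' : ℝ → ℝ} {A B c : ℝ} (hAB : A ≤ B)
    (hf : ∀ t ∈ Set.Icc A B, HasDerivAt f (f' t) t)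
    (hc : ∀ t ∈ Set.Icc A B, c ≤ f' t) : c * (B - A) ≤ f B - f A := by
  have := incr_le (f := fun u => -f u) (f' := fun u => -f' u) (c := -c) hAB
    (fun t ht => (hf t ht).neg) (fun t ht => by have := hc t ht; simp; linarith)
  linarith

private lemma abs_incr_le {f f' : ℝ → ℝ} {A B c : ℝ} (hAB : A ≤ B)
    (hf : ∀ t ∈ Set.Icc A B, HasDerivAt f (f' t) t)
    (hc : ∀ t ∈ Set.Icc A B, |f' t| ≤ c) : |f B - f A| ≤ c * (B - A) := by
  rw [abs_le]
  constructor
  · have := incr_ge (c := -c) hAB hf (fun t ht => (abs_le.1 (hc t ht)).1); linarith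
  · exact incr_le hAB hf (fun t ht => (abs_le.1 (hc t ht)).2)

private lemma mono_incr {f f' : ℝ → ℝ} {A B : ℝ} (hAB : A ≤ B)
    (hf : ∀ t ∈ Set.Icc A B, HasDerivAt f (f' t) t)
    (hc : ∀ t ∈ Set.Icc A B, 0 ≤ f' t) : f A ≤ f B := by
  have := incr_ge hAB hf hc; linarith

private lemma taylor_bd {f f' f'' : ℝ → ℝ} {K A h : ℝ}
    (hf : ∀ t, HasDerivAt f (f' t) t) (hf' : ∀ t, HasDerivAt f' (f'' t) t)
    (hh : 0 ≤ h) (hK : ∀ t ∈ Set.Icc A (A + h), |f'' t| ≤ K) :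
    |f (A + h) - f A - h * f' A| ≤ K * h ^ 2 / 2 := by
  set u : ℝ → ℝ := fun s => f s - f A - (s - A) * f' A with hu
  have hud : ∀ s, HasDerivAt u (f' s - f' A) s := by
    intro s
    have h1 : HasDerivAt (fun s : ℝ => (s - A) * f' A) (f' A) s := by
      simpa using (((hasDerivAt_id s).sub_const A).mul_const (f' A))
    rw [hu]; exact ((hf s).sub_const (f A)).sub h1
  have hub : ∀ s ∈ Set.Icc A (A + h), |f' s - f' A| ≤ K * (s - A) := by
    intro s hs
    exact abs_incr_le hs.1 (fun t ht => hf' t)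
      (fun t ht => hK t ⟨ht.1, le_trans ht.2 hs.2⟩)
  have hAh : A ≤ A + h := by linarith
  have hsq : ∀ s : ℝ, HasDerivAt (fun s : ℝ => K * (s - A) ^ 2 / 2) (K * (s - A)) s := by
    intro s
    have := ((((hasDerivAt_id s).sub_const A).pow 2).const_mul K).div_const 2
    refine this.congr_deriv ?_
    simp; ring
  have hu0 : u A = 0 := by simp [hu]
  have upper : u (A + h) ≤ K * h ^ 2 / 2 := by
    have := mono_incr (f := fun s => K * (s - A) ^ 2 / 2 - u s)
      (f' := fun s => K * (s - A) - (f' s - f' A)) hAh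
      (fun s hs => (hsq s).sub (hud s))
      (fun s hs => by
        have h2 := (abs_le.1 (hub s hs)).2
        show (0:ℝ) ≤ K * (s - A) - (f' s - f' A); linarith)
    simp only [hu0] at this
    nlinarith [this]
  have lower : -(K * h ^ 2 / 2) ≤ u (A + h) := by
    have := mono_incr (f := fun s => K * (s - A) ^ 2 / 2 + u s)
      (f' := fun s => K * (s - A) + (f' s - f' A)) hAh
      (fun s hs => (hsq s).add (hud s))
      (fun s hs => by
        have h2 := (abs_le.1 (hub s hs)).1
        show (0:ℝ) ≤ K * (s - A) + (f' s - f' A); linarith)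
    simp only [hu0] at this
    nlinarith [this]
  have heq : u (A + h) = f (A + h) - f A - h * f' A := by simp only [hu]; ring_nf
  rw [abs_le]; constructor <;> rw [← heq] <;> linarith

private lemma landau {f f' f'' : ℝ → ℝ} {K : ℝ}
    (hf : ∀ t, HasDerivAt f (f' t) t) (hf' : ∀ t, HasDerivAt f' (f'' t) t)
    (hK : ∀ t, 0 ≤ t → |f'' t| ≤ K) (h0 : Tendsto f atTop (𝓝 0)) :
    Tendsto f' atTop (𝓝 0) := by
  have hK0 : 0 ≤ K := le_trans (abs_nonneg _) (hK 0 le_rfl)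
  set K' := K + 1 with hK'
  have hK'pos : 0 < K' := by linarith
  rw [Metric.tendsto_atTop]
  intro ε hε
  set h := ε / (2 * K') with hhdef
  have hhpos : 0 < h := by positivity
  rw [Metric.tendsto_atTop] at h0
  obtain ⟨N, hN⟩ := h0 (ε * h / 8) (by positivity)
  refine ⟨max N 0, fun t ht => ?_⟩
  have htN : N ≤ t := le_trans (le_max_left _ _) ht
  have ht0 : (0:ℝ) ≤ t := le_trans (le_max_right _ _) ht
  have hT := taylor_bd (K := K') (A := t) (h := h) hf hf' hhpos.le
    (fun s hs => le_trans (hK s (le_trans ht0 hs.1)) (by linarith))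
  have h1 : |f t| < ε * h / 8 := by simpa [Real.dist_eq] using hN t htN
  have h2 : |f (t + h)| < ε * h / 8 := by
    simpa [Real.dist_eq] using hN (t + h) (by linarith)
  rw [Real.dist_eq, sub_zero]
  have key : h * f' t = (f (t + h) - f t) - (f (t + h) - f t - h * f' t) := by ring
  have hb1 : |h * f' t| ≤ |f (t + h) - f t| + |f (t + h) - f t - h * f' t| := by
    have h5 := norm_sub_le (f (t + h) - f t) (f (t + h) - f t - h * f' t)
    simp only [Real.norm_eq_abs] at h5
    have e : f (t + h) - f t - (f (t + h) - f t - h * f' t) = h * f' t := by ring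
    rwa [e] at h5
  have hb2 : |f (t + h) - f t| ≤ |f (t + h)| + |f t| := by
    simpa [Real.norm_eq_abs] using norm_sub_le (f (t + h)) (f t)
  have hKh : K' * h ^ 2 / 2 = ε * h / 4 := by
    have e : K' * h = ε / 2 := by rw [hhdef]; field_simp
    rw [show K' * h ^ 2 / 2 = (K' * h) * h / 2 by ring, e]; ring
  have hfin : |h * f' t| ≤ ε * h / 2 := by
    rw [hKh] at hT; linarith
  rw [abs_mul, abs_of_pos hhpos] at hfin
  have : |f' t| ≤ ε / 2 := le_of_mul_le_mul_left (by linarith) hhpos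
  linarith

private lemma barbalat_mono {v v' w w' : ℝ → ℝ} {c K A : ℝ} (hc : 0 < c)
    (hv : ∀ t, HasDerivAt v (v' t) t) (hw : ∀ t, HasDerivAt w (w' t) t)
    (hv' : ∀ t, 0 ≤ t → c * (w t) ^ 2 ≤ v' t)
    (hA : ∀ t, 0 ≤ t → v t ≤ A)
    (hK : ∀ t, 0 ≤ t → |w' t| ≤ K) :
    Tendsto w atTop (𝓝 0) := by
  have hvpos : ∀ t, 0 ≤ t → 0 ≤ v' t := fun t ht => le_trans (by positivity) (hv' t ht)
  have hK0 : 0 ≤ K := le_trans (abs_nonneg _) (hK 0 le_rfl)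
  set K' := K + 1 with hK'def
  have hK' : 0 < K' := by linarith
  by_contra hcon
  rw [Metric.tendsto_atTop] at hcon
  push_neg at hcon
  obtain ⟨ε, hε, hfreq⟩ := hcon
  set δ := ε / (2 * K') with hδdef
  have hδ : 0 < δ := by positivity
  set η := c * (ε / 2) ^ 2 * δ with hηdef
  have hη : 0 < η := by positivity
  have step : ∀ n : ℕ, ∃ t, 0 ≤ t ∧ v 0 + n * η ≤ v t := by
    intro n
    induction n with
    | zero => exact ⟨0, le_rfl, by simp⟩
    | succ n ih =>
      obtain ⟨t, ht0, htv⟩ := ih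
      obtain ⟨t', ht', hwt'⟩ := hfreq t
      have ht'0 : 0 ≤ t' := le_trans ht0 ht'
      rw [Real.dist_eq, sub_zero] at hwt'
      have hlow : ∀ s ∈ Set.Icc t' (t' + δ), ε / 2 ≤ |w s| := by
        intro s hs
        have hws : |w s - w t'| ≤ K' * (s - t') := by
          exact abs_incr_le hs.1 (fun u hu => hw u)
            (fun u hu => le_trans (hK u (le_trans ht'0 hu.1)) (by linarith))
        have h1 : K' * (s - t') ≤ K' * δ := by
          have := hs.2; nlinarith
        have h2 : K' * δ = ε / 2 := by
          rw [hδdef]; field_simp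
        have h7 := abs_sub_abs_le_abs_sub (w t') (w s)
        have h3 : |w t' - w s| = |w s - w t'| := abs_sub_comm _ _
        have h4 : |w s - w t'| ≤ ε / 2 := le_trans hws (le_trans h1 h2.le)
        linarith [hwt', h7, h3, h4]
      have hvstep : v t' + η ≤ v (t' + δ) := by
        have := incr_ge (c := c * (ε / 2) ^ 2) (by linarith : t' ≤ t' + δ)
          (fun u hu => hv u)
          (fun u hu => by
            have h4 := hlow u hu
            have h5 : (ε / 2) ^ 2 ≤ (w u) ^ 2 := by
              have := sq_abs (w u); nlinarith [sq_nonneg (|w u| - ε/2)]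
            have h6 := hv' u (le_trans ht'0 hu.1)
            nlinarith)
        rw [hηdef]; nlinarith
      have hmono : v t ≤ v t' := mono_incr ht' (fun u hu => hv u)
        (fun u hu => hvpos u (le_trans ht0 hu.1))
      refine ⟨t' + δ, by linarith, ?_⟩
      push_cast
      linarith
  obtain ⟨n, hn⟩ := exists_nat_gt ((A - v 0) / η)
  obtain ⟨t, ht0, htv⟩ := step n
  have := hA t ht0
  have : (n : ℝ) ≤ (A - v 0) / η := by
    rw [le_div_iff₀ hη]; linarith
  linarith

private lemma hasDerivAt_mveval {n : ℕ} (σ : Fin n → ℝ → ℝ) (σ' : Fin n → ℝ) (t : ℝ)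
    (h : ∀ i, HasDerivAt (fun u => σ i u) (σ' i) t) (P : MvPolynomial (Fin n) ℝ) :
    HasDerivAt (fun u => eval (fun i => σ i u) P)
      (∑ i, σ' i * eval (fun i => σ i t) (pderiv i P)) t := by
  induction P using MvPolynomial.induction_on with
  | C c =>
    simp only [eval_C, map_zero, pderiv_C, eval_zero, mul_zero, Finset.sum_const_zero]
    exact hasDerivAt_const t c
  | add p q hp hq =>
    simp only [map_add, mul_add, Finset.sum_add_distrib]
    exact hp.add hq
  | mul_X p i hp =>
    have key := hp.mul (h i)
    convert key using 1
    · rfl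
    · rfl
    · ext u; simp [eval_mul]
    · simp only [pderiv_mul, pderiv_X, map_add, eval_mul, eval_X, mul_add,
        Finset.sum_add_distrib]
      congr 1
      · rw [Finset.sum_mul]
        apply Finset.sum_congr rfl; intro j _
        ring
      · rw [Finset.sum_eq_single i]
        · simp [mul_comm]
        · intro j _ hji
          simp [Pi.single_apply, hji]
        · simp

private lemma sos_eval_nonneg {n m : ℕ} {Q : Matrix (Fin m) (Fin m) ℝ} (hQ : Q.PosSemidef)
    (a : Fin m → MvPolynomial (Fin n) ℝ) (φ : Fin n → ℝ) :
    0 ≤ eval φ (∑ i, ∑ j, C (Q i j) * a i * a j) := by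
  have h := hQ.dotProduct_mulVec_nonneg (fun i => eval φ (a i))
  simp only [star_trivial, dotProduct, Matrix.mulVec, Finset.mul_sum] at h
  simp only [map_sum, eval_mul, eval_C]
  refine le_trans h (le_of_eq ?_)
  apply Finset.sum_congr rfl; intro i _
  apply Finset.sum_congr rfl; intro j _
  ring

private lemma continuous_mveval {n : ℕ} (P : MvPolynomial (Fin n) ℝ) :
    Continuous (fun g : Fin n → ℝ => eval g P) := by
  induction P using MvPolynomial.induction_on with
  | C c => simpa using continuous_const
  | add p q hp hq => simp only [map_add]; exact hp.add hq
  | mul_X p i hp => simp only [eval_mul, eval_X]; exact hp.mul (continuous_apply i)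

private lemma key_ineq
    {M : ℤ} (hM : 1 ≤ M) {rmin rmax : ℝ}
    {m₁ m₂ : ℕ}
    {V : MvPolynomial (Fin 4) ℝ} {b : Fin m₂ → MvPolynomial (Fin 4) ℝ}
    {s : MvPolynomial (Fin 3) ℝ} {a : Fin m₁ → MvPolynomial (Fin 3) ℝ}
    {Q : Matrix (Fin m₁) (Fin m₁) ℝ} {R : Matrix (Fin m₂) (Fin m₂) ℝ}
    (hQ : Q.PosSemidef) (hR : R.PosSemidef)
    (hs : s = ∑ i, ∑ j, C (Q i j) * a i * a j)
    (hmain :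
      (30 * X 1 - 30 * X 0) * pderiv 0 V
        + (C (3 * (M : ℝ)) * X 0 * X 3 - C (3 * (M : ℝ)) * X 0 * X 2 - 3 * X 1 + 3 * X 0)
            * pderiv 1 V
        + (C (3 * (M : ℝ)) * X 0 * X 1 - 8 * X 2) * pderiv 2 V
        - (X 1 - X 0) ^ 2
        - C ((M : ℝ) ^ 2) * (X 3 - C rmin) * (C rmax - X 3) * rename Fin.castSucc s
      = ∑ i, ∑ j, C (R i j) * b i * b j)
    {ρ : ℝ} (hρ1 : (M : ℝ) * rmin + 1 ≤ ρ) (hρ2 : ρ ≤ (M : ℝ) * rmax + 1)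
    (x0 x1 x2 : ℝ) :
    (x1 - x0)^2 / (3 * (M:ℝ)^2) ≤
      ∑ i, (![10*(x1 - x0)/(M:ℝ), (x0*(ρ - x2) - x1)/(M:ℝ), (x0*x1 - (8/3)*x2)/(M:ℝ), 0] i)
        * eval (![x0/(M:ℝ), x1/(M:ℝ), x2/(M:ℝ), (ρ-1)/(M:ℝ)]) (pderiv i V) := by
  have hM1 : (1:ℝ) ≤ (M:ℝ) := by exact_mod_cast hM
  have hM0 : (0:ℝ) < (M:ℝ) := by linarith
  have hMne : (M:ℝ) ≠ 0 := ne_of_gt hM0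
  set φ : Fin 4 → ℝ := ![x0/(M:ℝ), x1/(M:ℝ), x2/(M:ℝ), (ρ-1)/(M:ℝ)] with hφ
  have hev := congrArg (eval φ) hmain
  simp only [map_add, map_sub, map_mul, map_pow, map_ofNat, eval_C, eval_X, eval_rename] at hev
  set E0 := eval φ (pderiv 0 V)
  set E1 := eval φ (pderiv 1 V)
  set E2 := eval φ (pderiv 2 V)
  set Sv := eval (φ ∘ Fin.castSucc) s with hSv
  set Rv := eval φ (∑ i, ∑ j, C (R i j) * b i * b j) with hRv
  have hS0 : 0 ≤ Sv := by rw [hSv, hs]; exact sos_eval_nonneg hQ a _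
  have hR0 : 0 ≤ Rv := by rw [hRv]; exact sos_eval_nonneg hR b _
  have hφ0 : φ 0 = x0/(M:ℝ) := by rw [hφ]; rfl
  have hφ1 : φ 1 = x1/(M:ℝ) := by rw [hφ]; rfl
  have hφ2 : φ 2 = x2/(M:ℝ) := by rw [hφ]; rfl
  have hφ3 : φ 3 = (ρ-1)/(M:ℝ) := by rw [hφ]; rfl
  rw [hφ0, hφ1, hφ2, hφ3] at hev
  have hrbound : 0 ≤ ((ρ-1)/(M:ℝ) - rmin) * (rmax - (ρ-1)/(M:ℝ)) := by
    apply mul_nonneg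
    · rw [sub_nonneg, le_div_iff₀ hM0]; linarith
    · rw [sub_nonneg, div_le_iff₀ hM0]; linarith
  rw [Fin.sum_univ_four]
  have hc0 : (![10*(x1 - x0)/(M:ℝ), (x0*(ρ - x2) - x1)/(M:ℝ), (x0*x1 - (8/3)*x2)/(M:ℝ), 0] : Fin 4 → ℝ) 0 = 10*(x1 - x0)/(M:ℝ) := rfl
  have hc1 : (![10*(x1 - x0)/(M:ℝ), (x0*(ρ - x2) - x1)/(M:ℝ), (x0*x1 - (8/3)*x2)/(M:ℝ), 0] : Fin 4 → ℝ) 1 = (x0*(ρ - x2) - x1)/(M:ℝ) := rfl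
  have hc2 : (![10*(x1 - x0)/(M:ℝ), (x0*(ρ - x2) - x1)/(M:ℝ), (x0*x1 - (8/3)*x2)/(M:ℝ), 0] : Fin 4 → ℝ) 2 = (x0*x1 - (8/3)*x2)/(M:ℝ) := rfl
  have hc3 : (![10*(x1 - x0)/(M:ℝ), (x0*(ρ - x2) - x1)/(M:ℝ), (x0*x1 - (8/3)*x2)/(M:ℝ), 0] : Fin 4 → ℝ) 3 = 0 := rfl
  rw [hc0, hc1, hc2, hc3]
  have hgc1 : (x0*(ρ - x2) - x1)/(M:ℝ)
      = (x0/(M:ℝ))*((M:ℝ)*((ρ-1)/(M:ℝ)) + 1 - (M:ℝ)*(x2/(M:ℝ))) - x1/(M:ℝ) := by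
    field_simp; ring
  have hgc0 : 10*(x1 - x0)/(M:ℝ) = 10*(x1/(M:ℝ) - x0/(M:ℝ)) := by ring
  have hgc2 : (x0*x1 - (8/3)*x2)/(M:ℝ)
      = (M:ℝ)*(x0/(M:ℝ))*(x1/(M:ℝ)) - (8/3)*(x2/(M:ℝ)) := by
    field_simp
  have hgoal : (x1 - x0)^2 / (3 * (M:ℝ)^2) = (x1/(M:ℝ) - x0/(M:ℝ))^2/3 := by
    have h9 : x1/(M:ℝ) - x0/(M:ℝ) = (x1-x0)/(M:ℝ) := by ring
    rw [h9, div_pow]; ring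
  rw [hgc0, hgc1, hgc2, hgoal]
  have key : 10*(x1/(M:ℝ) - x0/(M:ℝ)) * E0
      + ((x0/(M:ℝ))*((M:ℝ)*((ρ-1)/(M:ℝ)) + 1 - (M:ℝ)*(x2/(M:ℝ))) - x1/(M:ℝ)) * E1
      + ((M:ℝ)*(x0/(M:ℝ))*(x1/(M:ℝ)) - (8/3)*(x2/(M:ℝ))) * E2
      + 0 * (eval φ ((pderiv 3) V))
      = ((x1/(M:ℝ) - x0/(M:ℝ))^2
          + (M:ℝ)^2*(((ρ-1)/(M:ℝ) - rmin)*(rmax - (ρ-1)/(M:ℝ)))*Sv + Rv)/3 := by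
    linear_combination hev / 3
  rw [key]
  have hterm : 0 ≤ (M:ℝ)^2*(((ρ-1)/(M:ℝ) - rmin)*(rmax - (ρ-1)/(M:ℝ)))*Sv :=
    mul_nonneg (mul_nonneg (by positivity) hrbound) hS0
  have hsq : 0 ≤ (x1/(M:ℝ) - x0/(M:ℝ))^2 := by positivity
  linarith

private lemma hasDerivAt_traj {M : ℤ} {ρ : ℝ} (x : ℝ → EuclideanSpace ℝ (Fin 3))
    (V : MvPolynomial (Fin 4) ℝ) (t : ℝ)
    (h1 : HasDerivAt (fun u => x u 0) (10 * (x t 1 - x t 0)) t)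
    (h2 : HasDerivAt (fun u => x u 1) (x t 0 * (ρ - x t 2) - x t 1) t)
    (h3 : HasDerivAt (fun u => x u 2) (x t 0 * x t 1 - (8 / 3) * x t 2) t) :
    HasDerivAt (fun u => eval (![x u 0/(M:ℝ), x u 1/(M:ℝ), x u 2/(M:ℝ), (ρ-1)/(M:ℝ)]) V)
      (∑ i, (![10*(x t 1 - x t 0)/(M:ℝ), (x t 0*(ρ - x t 2) - x t 1)/(M:ℝ),
          (x t 0*x t 1 - (8/3)*x t 2)/(M:ℝ), 0] i)
        * eval (![x t 0/(M:ℝ), x t 1/(M:ℝ), x t 2/(M:ℝ), (ρ-1)/(M:ℝ)]) (pderiv i V)) t := by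
  have := hasDerivAt_mveval
    (fun i u => (![x u 0/(M:ℝ), x u 1/(M:ℝ), x u 2/(M:ℝ), (ρ-1)/(M:ℝ)] : Fin 4 → ℝ) i)
    (![10*(x t 1 - x t 0)/(M:ℝ), (x t 0*(ρ - x t 2) - x t 1)/(M:ℝ),
        (x t 0*x t 1 - (8/3)*x t 2)/(M:ℝ), 0]) t ?_ V
  · exact this
  · intro i
    fin_cases i
    · simpa using h1.div_const (M:ℝ)
    · simpa using h2.div_const (M:ℝ)
    · simpa using h3.div_const (M:ℝ)
    · simpa using hasDerivAt_const t ((ρ-1)/(M:ℝ))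

private lemma abs_sub_le' (a b : ℝ) : |a - b| ≤ |a| + |b| := by
  simpa [Real.norm_eq_abs] using norm_sub_le a b

private lemma abs_mul_le {a b A B : ℝ} (ha : |a| ≤ A) (hb : |b| ≤ B) (hA : 0 ≤ A) :
    |a*b| ≤ A*B := by
  rw [abs_mul]; exact mul_le_mul ha hb (abs_nonneg _) hA

set_option maxHeartbeats 2000000 in
theorem lorenz_globally_stable_of_sos
    (M : ℤ) (hM : 1 ≤ M) (rmin rmax : ℝ) (hr : rmin ≤ rmax)
    (m₁ m₂ : ℕ)
    (V : MvPolynomial (Fin 4) ℝ) (b : Fin m₂ → MvPolynomial (Fin 4) ℝ)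
    (s : MvPolynomial (Fin 3) ℝ) (a : Fin m₁ → MvPolynomial (Fin 3) ℝ)
    (Q : Matrix (Fin m₁) (Fin m₁) ℝ) (R : Matrix (Fin m₂) (Fin m₂) ℝ)
    (hQ : Q.PosSemidef) (hR : R.PosSemidef)
    (hs : s = ∑ i, ∑ j, C (Q i j) * a i * a j)
    (hmain :
      (30 * X 1 - 30 * X 0) * pderiv 0 V
        + (C (3 * (M : ℝ)) * X 0 * X 3 - C (3 * (M : ℝ)) * X 0 * X 2 - 3 * X 1 + 3 * X 0)
            * pderiv 1 V
        + (C (3 * (M : ℝ)) * X 0 * X 1 - 8 * X 2) * pderiv 2 V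
        - (X 1 - X 0) ^ 2
        - C ((M : ℝ) ^ 2) * (X 3 - C rmin) * (C rmax - X 3) * rename Fin.castSucc s
      = ∑ i, ∑ j, C (R i j) * b i * b j) :
    ∀ ρ : ℝ, (M : ℝ) * rmin + 1 ≤ ρ → ρ ≤ (M : ℝ) * rmax + 1 →
      ∀ x : ℝ → EuclideanSpace ℝ (Fin 3),
        (∀ t : ℝ,
          HasDerivAt (fun u => x u 0) (10 * (x t 1 - x t 0)) t ∧
          HasDerivAt (fun u => x u 1) (x t 0 * (ρ - x t 2) - x t 1) t ∧
          HasDerivAt (fun u => x u 2) (x t 0 * x t 1 - (8 / 3) * x t 2) t) →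
        Tendsto (fun t => Metric.infDist (x t)
            {y : EuclideanSpace ℝ (Fin 3) |
              10 * (y 1 - y 0) = 0 ∧ y 0 * (ρ - y 2) - y 1 = 0 ∧ y 0 * y 1 - (8 / 3) * y 2 = 0})
          atTop (𝓝 0) := by
  intro ρ hρ1 hρ2 x hx
  have hx1 : ∀ t : ℝ, HasDerivAt (fun u => x u 0) (10 * (x t 1 - x t 0)) t := fun t => (hx t).1
  have hx2 : ∀ t : ℝ, HasDerivAt (fun u => x u 1) (x t 0 * (ρ - x t 2) - x t 1) t :=
    fun t => (hx t).2.1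
  have hx3 : ∀ t : ℝ, HasDerivAt (fun u => x u 2) (x t 0 * x t 1 - (8 / 3) * x t 2) t :=
    fun t => (hx t).2.2
  have hM1 : (1:ℝ) ≤ (M:ℝ) := by exact_mod_cast hM
  have hM0 : (0:ℝ) < (M:ℝ) := by linarith
  -- Step 1 : boundedness of the trajectory for t ≥ 0
  obtain ⟨B, hB0, hB⟩ : ∃ B : ℝ, 0 ≤ B ∧
      ∀ t, 0 ≤ t → |x t 0| ≤ B ∧ |x t 1| ≤ B ∧ |x t 2| ≤ B := by
    have hL : ∀ t, HasDerivAt (fun u => (x u 0)^2 + (x u 1)^2 + (x u 2 - (ρ+10))^2)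
        (2*(x t 0)*(10*(x t 1 - x t 0)) + 2*(x t 1)*(x t 0*(ρ - x t 2) - x t 1)
          + 2*(x t 2 - (ρ+10))*(x t 0*x t 1 - (8/3)*x t 2)) t := by
      intro t
      have h1 := (hx1 t).pow 2
      have h2 := (hx2 t).pow 2
      have h3 := ((hx3 t).sub_const (ρ+10)).pow 2
      have h := (h1.add h2).add h3
      refine h.congr_deriv ?_
      simp only [Nat.cast_ofNat, pow_one]
      ring
    have hG : ∀ t, HasDerivAt
        (fun u => Real.exp (2*u) * ((x u 0)^2 + (x u 1)^2 + (x u 2 - (ρ+10))^2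
          - 3*(ρ+10)^2/2))
        (Real.exp (2*t)*2 * ((x t 0)^2 + (x t 1)^2 + (x t 2 - (ρ+10))^2 - 3*(ρ+10)^2/2)
          + Real.exp (2*t) * (2*(x t 0)*(10*(x t 1 - x t 0))
            + 2*(x t 1)*(x t 0*(ρ - x t 2) - x t 1)
            + 2*(x t 2 - (ρ+10))*(x t 0*x t 1 - (8/3)*x t 2))) t := by
      intro t
      have he : HasDerivAt (fun u : ℝ => Real.exp (2*u)) (Real.exp (2*t)*2) t := by
        have := ((hasDerivAt_id t).const_mul (2:ℝ)).exp
        simpa using this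
      exact he.mul ((hL t).sub_const (3*(ρ+10)^2/2))
    have hdec : ∀ t, 0 ≤ t →
        Real.exp (2*t) * ((x t 0)^2 + (x t 1)^2 + (x t 2 - (ρ+10))^2 - 3*(ρ+10)^2/2)
          ≤ (x 0 0)^2 + (x 0 1)^2 + (x 0 2 - (ρ+10))^2 - 3*(ρ+10)^2/2 := by
      intro t ht
      have h := incr_le (c := 0) ht (fun s _ => hG s) ?_
      · have he0 : Real.exp (2*(0:ℝ)) = 1 := by norm_num
        rw [zero_mul] at h
        rw [he0] at h
        linarith
      · intro s _
        have hexp := Real.exp_pos (2*s)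
        have hcore : 2 * ((x s 0)^2 + (x s 1)^2 + (x s 2 - (ρ+10))^2 - 3*(ρ+10)^2/2)
            + (2*(x s 0)*(10*(x s 1 - x s 0)) + 2*(x s 1)*(x s 0*(ρ - x s 2) - x s 1)
              + 2*(x s 2 - (ρ+10))*(x s 0*x s 1 - (8/3)*x s 2)) ≤ 0 := by
          nlinarith [sq_nonneg (x s 2 - (ρ+10)/5), sq_nonneg (ρ+10), sq_nonneg (x s 0),
            sq_nonneg (x s 1)]
        nlinarith [hexp, hcore, mul_le_mul_of_nonneg_left hcore hexp.le]
    have hLD : ∀ t, 0 ≤ t → (x t 0)^2 + (x t 1)^2 + (x t 2 - (ρ+10))^2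
        ≤ 3*(ρ+10)^2/2 + |(x 0 0)^2 + (x 0 1)^2 + (x 0 2 - (ρ+10))^2 - 3*(ρ+10)^2/2| := by
      intro t ht
      have h := hdec t ht
      have h1 : (1:ℝ) ≤ Real.exp (2*t) := Real.one_le_exp (by linarith)
      have h2 : (x 0 0)^2 + (x 0 1)^2 + (x 0 2 - (ρ+10))^2 - 3*(ρ+10)^2/2
          ≤ |(x 0 0)^2 + (x 0 1)^2 + (x 0 2 - (ρ+10))^2 - 3*(ρ+10)^2/2| := le_abs_self _
      have h0 : (0:ℝ) ≤ |(x 0 0)^2 + (x 0 1)^2 + (x 0 2 - (ρ+10))^2 - 3*(ρ+10)^2/2| :=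
        abs_nonneg _
      rcases le_or_gt ((x t 0)^2 + (x t 1)^2 + (x t 2 - (ρ+10))^2) (3*(ρ+10)^2/2)
        with hc | hc
      · linarith
      · nlinarith
    set D : ℝ := 3*(ρ+10)^2/2
      + |(x 0 0)^2 + (x 0 1)^2 + (x 0 2 - (ρ+10))^2 - 3*(ρ+10)^2/2| with hDdef
    have hDpos : 0 ≤ D := by rw [hDdef]; positivity
    refine ⟨Real.sqrt D + (|ρ| + 10), by positivity, fun t ht => ?_⟩
    have h := hLD t ht
    have s0 : |x t 0| ≤ Real.sqrt D := by
      rw [← Real.sqrt_sq_eq_abs]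
      apply Real.sqrt_le_sqrt
      nlinarith [sq_nonneg (x t 1), sq_nonneg (x t 2 - (ρ+10))]
    have s1 : |x t 1| ≤ Real.sqrt D := by
      rw [← Real.sqrt_sq_eq_abs]
      apply Real.sqrt_le_sqrt
      nlinarith [sq_nonneg (x t 0), sq_nonneg (x t 2 - (ρ+10))]
    have s2 : |x t 2 - (ρ+10)| ≤ Real.sqrt D := by
      rw [← Real.sqrt_sq_eq_abs]
      apply Real.sqrt_le_sqrt
      nlinarith [sq_nonneg (x t 0), sq_nonneg (x t 1)]
    have tri : |x t 2| ≤ |x t 2 - (ρ+10)| + |ρ + 10| := by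
      have := abs_add_le (x t 2 - (ρ+10)) (ρ+10)
      simpa using this
    have habs10 : |ρ + 10| ≤ |ρ| + 10 := by
      have := abs_add_le ρ (10:ℝ)
      have h9 : |(10:ℝ)| = 10 := by norm_num
      linarith
    have hρ0 : (0:ℝ) ≤ |ρ| := abs_nonneg ρ
    exact ⟨by linarith, by linarith, by linarith⟩
  -- Step 2 : key derivative facts for the Lyapunov function
  have hvderiv : ∀ t, HasDerivAt
      (fun u => eval (![x u 0/(M:ℝ), x u 1/(M:ℝ), x u 2/(M:ℝ), (ρ-1)/(M:ℝ)]) V)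
      (∑ i, (![10*(x t 1 - x t 0)/(M:ℝ), (x t 0*(ρ - x t 2) - x t 1)/(M:ℝ),
          (x t 0*x t 1 - (8/3)*x t 2)/(M:ℝ), 0] i)
        * eval (![x t 0/(M:ℝ), x t 1/(M:ℝ), x t 2/(M:ℝ), (ρ-1)/(M:ℝ)]) (pderiv i V)) t :=
    fun t => hasDerivAt_traj x V t (hx1 t) (hx2 t) (hx3 t)
  have hkey : ∀ t, 0 ≤ t → (1/(3*(M:ℝ)^2)) * (x t 1 - x t 0)^2 ≤
      ∑ i, (![10*(x t 1 - x t 0)/(M:ℝ), (x t 0*(ρ - x t 2) - x t 1)/(M:ℝ),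
          (x t 0*x t 1 - (8/3)*x t 2)/(M:ℝ), 0] i)
        * eval (![x t 0/(M:ℝ), x t 1/(M:ℝ), x t 2/(M:ℝ), (ρ-1)/(M:ℝ)]) (pderiv i V) := by
    intro t _
    have h := key_ineq hM hQ hR hs hmain hρ1 hρ2 (x t 0) (x t 1) (x t 2)
    have e : (1/(3*(M:ℝ)^2)) * (x t 1 - x t 0)^2 = (x t 1 - x t 0)^2/(3*(M:ℝ)^2) := by ring
    rw [e]; exact h
  -- Step 3 : the Lyapunov function is bounded above on [0, ∞)
  obtain ⟨A, hA⟩ : ∃ A, ∀ t, 0 ≤ t →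
      eval (![x t 0/(M:ℝ), x t 1/(M:ℝ), x t 2/(M:ℝ), (ρ-1)/(M:ℝ)]) V ≤ A := by
    set Bx := max B (|(ρ-1)/(M:ℝ)|) with hBxdef
    have hcomp : IsCompact ((fun g : Fin 4 → ℝ => eval g V) ''
        (Set.Icc (fun _ => -Bx) (fun _ => Bx))) :=
      (isCompact_Icc).image (continuous_mveval V)
    obtain ⟨A, hAub⟩ := hcomp.bddAbove
    refine ⟨A, fun t ht => ?_⟩
    apply hAub
    refine ⟨![x t 0/(M:ℝ), x t 1/(M:ℝ), x t 2/(M:ℝ), (ρ-1)/(M:ℝ)], ?_, rfl⟩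
    obtain ⟨b1, b2, b3⟩ := hB t ht
    have hd : ∀ z : ℝ, |z| ≤ B → |z/(M:ℝ)| ≤ Bx := by
      intro z hz
      rw [abs_div, abs_of_pos hM0]
      calc |z|/(M:ℝ) ≤ |z| := div_le_self (abs_nonneg z) hM1
        _ ≤ B := hz
        _ ≤ Bx := le_max_left _ _
    have k0 := abs_le.mp (hd _ b1)
    have k1 := abs_le.mp (hd _ b2)
    have k2 := abs_le.mp (hd _ b3)
    have k3 := abs_le.mp (le_max_right B (|(ρ-1)/(M:ℝ)|))
    rw [Set.mem_Icc]
    constructor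
    · rw [Pi.le_def]
      intro i
      fin_cases i
      · exact k0.1
      · exact k1.1
      · exact k2.1
      · exact k3.1
    · rw [Pi.le_def]
      intro i
      fin_cases i
      · exact k0.2
      · exact k1.2
      · exact k2.2
      · exact k3.2
  -- Step 4 : bound for the derivative of w = x₂ - x₁
  obtain ⟨Kw, hKw⟩ : ∃ K, ∀ t, 0 ≤ t →
      |(x t 0*(ρ - x t 2) - x t 1) - 10*(x t 1 - x t 0)| ≤ K := by
    refine ⟨B*(|ρ|+B) + B + 10*(B+B), fun t ht => ?_⟩
    obtain ⟨b1, b2, b3⟩ := hB t ht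
    have h1 : |x t 0*(ρ - x t 2)| ≤ B*(|ρ|+B) := by
      refine abs_mul_le b1 ?_ hB0
      calc |ρ - x t 2| ≤ |ρ| + |x t 2| := abs_sub_le' ρ _
        _ ≤ |ρ| + B := by linarith
    have h2 : |x t 0*(ρ - x t 2) - x t 1| ≤ B*(|ρ|+B) + B :=
      le_trans (abs_sub_le' _ _) (by linarith)
    have h3 : |10*(x t 1 - x t 0)| ≤ 10*(B+B) := by
      have h4 := abs_sub_le' (x t 1) (x t 0)
      rw [abs_mul, abs_of_nonneg (by norm_num : (0:ℝ) ≤ 10)]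
      nlinarith
    calc |(x t 0*(ρ - x t 2) - x t 1) - 10*(x t 1 - x t 0)|
        ≤ |x t 0*(ρ - x t 2) - x t 1| + |10*(x t 1 - x t 0)| := abs_sub_le' _ _
      _ ≤ _ := by linarith
  have hw : ∀ t, HasDerivAt (fun u => x u 1 - x u 0)
      ((x t 0*(ρ - x t 2) - x t 1) - 10*(x t 1 - x t 0)) t := fun t => (hx2 t).sub (hx1 t)
  -- Step 5 : w → 0  (Barbalat)
  have hwlim : Tendsto (fun t => x t 1 - x t 0) atTop (𝓝 0) :=
    barbalat_mono (by positivity) hvderiv hw hkey hA hKw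
  -- Step 6 : w' → 0 (Landau)
  have hw' : ∀ t, HasDerivAt (fun u => (x u 0*(ρ - x u 2) - x u 1) - 10*(x u 1 - x u 0))
      (10*(x t 1 - x t 0)*(ρ - x t 2) - x t 0*(x t 0*x t 1 - (8/3)*x t 2)
        - (x t 0*(ρ - x t 2) - x t 1) - 10*((x t 0*(ρ - x t 2) - x t 1) - 10*(x t 1 - x t 0))) t := by
    intro t
    have ha := ((hx1 t).mul ((hasDerivAt_const t ρ).sub (hx3 t))).sub (hx2 t)
    have hb := ha.sub (((hx2 t).sub (hx1 t)).const_mul 10)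
    refine hb.congr_deriv ?_
    simp only [Pi.sub_apply, Pi.mul_apply]
    ring
  obtain ⟨Kw2, hKw2⟩ : ∃ K, ∀ t, 0 ≤ t →
      |10*(x t 1 - x t 0)*(ρ - x t 2) - x t 0*(x t 0*x t 1 - (8/3)*x t 2)
        - (x t 0*(ρ - x t 2) - x t 1) - 10*((x t 0*(ρ - x t 2) - x t 1) - 10*(x t 1 - x t 0))| ≤ K := by
    refine ⟨(10*(B+B))*(|ρ|+B) + B*(B*B+3*B) + (B*(|ρ|+B)+B) + 10*Kw, fun t ht => ?_⟩
    obtain ⟨b1, b2, b3⟩ := hB t ht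
    have hw2 : |x t 1 - x t 0| ≤ B + B := le_trans (abs_sub_le' _ _) (by linarith)
    have hz : |ρ - x t 2| ≤ |ρ| + B := le_trans (abs_sub_le' _ _) (by linarith)
    have h1 : |10*(x t 1 - x t 0)*(ρ - x t 2)| ≤ (10*(B+B))*(|ρ|+B) := by
      refine abs_mul_le ?_ hz (by positivity)
      rw [abs_mul, abs_of_nonneg (by norm_num : (0:ℝ) ≤ 10)]
      linarith
    have hg : |x t 0*x t 1 - (8/3)*x t 2| ≤ B*B + 3*B := by
      refine le_trans (abs_sub_le' _ _) ?_
      have h5 := abs_mul_le b1 b2 hB0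
      have h6 : |(8/3)*x t 2| ≤ 3*B := by
        rw [abs_mul, abs_of_nonneg (by norm_num : (0:ℝ) ≤ 8/3)]
        nlinarith [abs_nonneg (x t 2)]
      linarith
    have h2 : |x t 0*(x t 0*x t 1 - (8/3)*x t 2)| ≤ B*(B*B+3*B) :=
      abs_mul_le b1 hg hB0
    have h3 : |x t 0*(ρ - x t 2) - x t 1| ≤ B*(|ρ|+B) + B := by
      refine le_trans (abs_sub_le' _ _) ?_
      have := abs_mul_le b1 hz hB0
      linarith
    have h4 : |10*((x t 0*(ρ - x t 2) - x t 1) - 10*(x t 1 - x t 0))| ≤ 10*Kw := by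
      rw [abs_mul, abs_of_nonneg (by norm_num : (0:ℝ) ≤ 10)]
      have := hKw t ht
      linarith
    calc |10*(x t 1 - x t 0)*(ρ - x t 2) - x t 0*(x t 0*x t 1 - (8/3)*x t 2)
        - (x t 0*(ρ - x t 2) - x t 1) - 10*((x t 0*(ρ - x t 2) - x t 1) - 10*(x t 1 - x t 0))|
        ≤ |10*(x t 1 - x t 0)*(ρ - x t 2) - x t 0*(x t 0*x t 1 - (8/3)*x t 2)
            - (x t 0*(ρ - x t 2) - x t 1)|
          + |10*((x t 0*(ρ - x t 2) - x t 1) - 10*(x t 1 - x t 0))| := abs_sub_le' _ _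
      _ ≤ |10*(x t 1 - x t 0)*(ρ - x t 2) - x t 0*(x t 0*x t 1 - (8/3)*x t 2)|
          + |x t 0*(ρ - x t 2) - x t 1|
          + |10*((x t 0*(ρ - x t 2) - x t 1) - 10*(x t 1 - x t 0))| := by
            linarith [abs_sub_le' (10*(x t 1 - x t 0)*(ρ - x t 2)
              - x t 0*(x t 0*x t 1 - (8/3)*x t 2)) (x t 0*(ρ - x t 2) - x t 1)]
      _ ≤ _ := by
            linarith [abs_sub_le' (10*(x t 1 - x t 0)*(ρ - x t 2))
              (x t 0*(x t 0*x t 1 - (8/3)*x t 2))]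
  have hw'lim : Tendsto (fun t => (x t 0*(ρ - x t 2) - x t 1) - 10*(x t 1 - x t 0))
      atTop (𝓝 0) := landau hw hw' hKw2 hwlim
  -- Step 7 : p = x₀(ρ-1-x₂) → 0
  have hplim : Tendsto (fun t => x t 0*(ρ - 1 - x t 2)) atTop (𝓝 0) := by
    have h := hw'lim.add (hwlim.const_mul (11:ℝ))
    have h0 : (0:ℝ) + 11*0 = 0 := by norm_num
    rw [h0] at h
    exact h.congr (fun t => by ring)
  -- Step 8 : p' → 0 (Landau again)
  have hp : ∀ t, HasDerivAt (fun u => x u 0*(ρ - 1 - x u 2))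
      (10*(x t 1 - x t 0)*(ρ - 1 - x t 2) - x t 0*(x t 0*x t 1 - (8/3)*x t 2)) t := by
    intro t
    have h := (hx1 t).mul ((hasDerivAt_const t (ρ-1)).sub (hx3 t))
    refine h.congr_deriv ?_
    simp only [Pi.sub_apply, Pi.mul_apply]
    ring
  have hp' : ∀ t, HasDerivAt
      (fun u => 10*(x u 1 - x u 0)*(ρ - 1 - x u 2) - x u 0*(x u 0*x u 1 - (8/3)*x u 2))
      (10*((x t 0*(ρ - x t 2) - x t 1) - 10*(x t 1 - x t 0))*(ρ - 1 - x t 2)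
        - 10*(x t 1 - x t 0)*(x t 0*x t 1 - (8/3)*x t 2)
        - (10*(x t 1 - x t 0)*(x t 0*x t 1 - (8/3)*x t 2)
           + x t 0*(10*(x t 1 - x t 0)*(x t 1) + x t 0*(x t 0*(ρ - x t 2) - x t 1)
              - (8/3)*(x t 0*x t 1 - (8/3)*x t 2)))) t := by
    intro t
    have h1 := (((hx2 t).sub (hx1 t)).const_mul 10).mul ((hasDerivAt_const t (ρ-1)).sub (hx3 t))
    have h2 := (hx1 t).mul (((hx1 t).mul (hx2 t)).sub ((hx3 t).const_mul (8/3)))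
    have h := h1.sub h2
    refine h.congr_deriv ?_
    simp only [Pi.sub_apply, Pi.mul_apply]
    ring
  obtain ⟨Kp2, hKp2⟩ : ∃ K, ∀ t, 0 ≤ t →
      |10*((x t 0*(ρ - x t 2) - x t 1) - 10*(x t 1 - x t 0))*(ρ - 1 - x t 2)
        - 10*(x t 1 - x t 0)*(x t 0*x t 1 - (8/3)*x t 2)
        - (10*(x t 1 - x t 0)*(x t 0*x t 1 - (8/3)*x t 2)
           + x t 0*(10*(x t 1 - x t 0)*(x t 1) + x t 0*(x t 0*(ρ - x t 2) - x t 1)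
              - (8/3)*(x t 0*x t 1 - (8/3)*x t 2)))| ≤ K := by
    refine ⟨(10*Kw)*(|ρ|+1+B) + (10*(B+B))*(B*B+3*B)
      + ((10*(B+B))*(B*B+3*B) + B*((10*(B+B))*B + B*(B*(|ρ|+B)+B) + 3*(B*B+3*B))),
      fun t ht => ?_⟩
    obtain ⟨b1, b2, b3⟩ := hB t ht
    have hw2 : |x t 1 - x t 0| ≤ B + B := le_trans (abs_sub_le' _ _) (by linarith)
    have hz : |ρ - x t 2| ≤ |ρ| + B := le_trans (abs_sub_le' _ _) (by linarith)
    have h10w : |10*(x t 1 - x t 0)| ≤ 10*(B+B) := by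
      rw [abs_mul, abs_of_nonneg (by norm_num : (0:ℝ) ≤ 10)]; linarith
    have hg : |x t 0*x t 1 - (8/3)*x t 2| ≤ B*B + 3*B := by
      refine le_trans (abs_sub_le' _ _) ?_
      have h5 := abs_mul_le b1 b2 hB0
      have h6 : |(8/3)*x t 2| ≤ 3*B := by
        rw [abs_mul, abs_of_nonneg (by norm_num : (0:ℝ) ≤ 8/3)]
        nlinarith [abs_nonneg (x t 2)]
      linarith
    have hz1 : |ρ - 1 - x t 2| ≤ |ρ| + 1 + B := by
      have h7 := abs_sub_le' (ρ - 1) (x t 2)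
      have h8 := abs_sub_le' ρ (1:ℝ)
      have h9 : |(1:ℝ)| = 1 := by norm_num
      linarith
    have hd2 : |x t 0*(ρ - x t 2) - x t 1| ≤ B*(|ρ|+B) + B := by
      refine le_trans (abs_sub_le' _ _) ?_
      have := abs_mul_le b1 hz hB0
      linarith
    have t1 : |10*((x t 0*(ρ - x t 2) - x t 1) - 10*(x t 1 - x t 0))*(ρ - 1 - x t 2)|
        ≤ (10*Kw)*(|ρ|+1+B) := by
      refine abs_mul_le ?_ hz1 ?_
      · rw [abs_mul, abs_of_nonneg (by norm_num : (0:ℝ) ≤ 10)]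
        have := hKw t ht; linarith
      · have := le_trans (abs_nonneg _) (hKw t ht); positivity
    have t2 : |10*(x t 1 - x t 0)*(x t 0*x t 1 - (8/3)*x t 2)| ≤ (10*(B+B))*(B*B+3*B) :=
      abs_mul_le h10w hg (by positivity)
    have hinner : |10*(x t 1 - x t 0)*(x t 1) + x t 0*(x t 0*(ρ - x t 2) - x t 1)
        - (8/3)*(x t 0*x t 1 - (8/3)*x t 2)|
        ≤ (10*(B+B))*B + B*(B*(|ρ|+B)+B) + 3*(B*B+3*B) := by
      have i1 : |10*(x t 1 - x t 0)*(x t 1)| ≤ (10*(B+B))*B := abs_mul_le h10w b2 (by positivity)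
      have i2 : |x t 0*(x t 0*(ρ - x t 2) - x t 1)| ≤ B*(B*(|ρ|+B)+B) := abs_mul_le b1 hd2 hB0
      have i3 : |(8/3)*(x t 0*x t 1 - (8/3)*x t 2)| ≤ 3*(B*B+3*B) := by
        rw [abs_mul, abs_of_nonneg (by norm_num : (0:ℝ) ≤ 8/3)]
        nlinarith [abs_nonneg (x t 0*x t 1 - (8/3)*x t 2)]
      calc |10*(x t 1 - x t 0)*(x t 1) + x t 0*(x t 0*(ρ - x t 2) - x t 1)
            - (8/3)*(x t 0*x t 1 - (8/3)*x t 2)|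
          ≤ |10*(x t 1 - x t 0)*(x t 1) + x t 0*(x t 0*(ρ - x t 2) - x t 1)|
            + |(8/3)*(x t 0*x t 1 - (8/3)*x t 2)| := abs_sub_le' _ _
        _ ≤ _ := by
            linarith [abs_add_le (10*(x t 1 - x t 0)*(x t 1))
              (x t 0*(x t 0*(ρ - x t 2) - x t 1))]
    have t3 : |10*(x t 1 - x t 0)*(x t 0*x t 1 - (8/3)*x t 2)
        + x t 0*(10*(x t 1 - x t 0)*(x t 1) + x t 0*(x t 0*(ρ - x t 2) - x t 1)
          - (8/3)*(x t 0*x t 1 - (8/3)*x t 2))|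
        ≤ (10*(B+B))*(B*B+3*B) + B*((10*(B+B))*B + B*(B*(|ρ|+B)+B) + 3*(B*B+3*B)) := by
      have i4 := abs_mul_le b1 hinner hB0
      calc _ ≤ |10*(x t 1 - x t 0)*(x t 0*x t 1 - (8/3)*x t 2)|
            + |x t 0*(10*(x t 1 - x t 0)*(x t 1) + x t 0*(x t 0*(ρ - x t 2) - x t 1)
              - (8/3)*(x t 0*x t 1 - (8/3)*x t 2))| := abs_add_le _ _
        _ ≤ _ := by linarith
    calc |10*((x t 0*(ρ - x t 2) - x t 1) - 10*(x t 1 - x t 0))*(ρ - 1 - x t 2)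
        - 10*(x t 1 - x t 0)*(x t 0*x t 1 - (8/3)*x t 2)
        - (10*(x t 1 - x t 0)*(x t 0*x t 1 - (8/3)*x t 2)
           + x t 0*(10*(x t 1 - x t 0)*(x t 1) + x t 0*(x t 0*(ρ - x t 2) - x t 1)
              - (8/3)*(x t 0*x t 1 - (8/3)*x t 2)))|
        ≤ |10*((x t 0*(ρ - x t 2) - x t 1) - 10*(x t 1 - x t 0))*(ρ - 1 - x t 2)
            - 10*(x t 1 - x t 0)*(x t 0*x t 1 - (8/3)*x t 2)|
          + |10*(x t 1 - x t 0)*(x t 0*x t 1 - (8/3)*x t 2)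
           + x t 0*(10*(x t 1 - x t 0)*(x t 1) + x t 0*(x t 0*(ρ - x t 2) - x t 1)
              - (8/3)*(x t 0*x t 1 - (8/3)*x t 2))| := abs_sub_le' _ _
      _ ≤ _ := by
          linarith [abs_sub_le' (10*((x t 0*(ρ - x t 2) - x t 1) - 10*(x t 1 - x t 0))*(ρ - 1 - x t 2))
            (10*(x t 1 - x t 0)*(x t 0*x t 1 - (8/3)*x t 2))]
  have hp'lim : Tendsto
      (fun t => 10*(x t 1 - x t 0)*(ρ - 1 - x t 2) - x t 0*(x t 0*x t 1 - (8/3)*x t 2))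
      atTop (𝓝 0) := landau hp hp' hKp2 hplim
  -- Step 9 : q = x₀(x₀x₁ - (8/3)x₂) → 0
  have hqlim : Tendsto (fun t => x t 0*(x t 0*x t 1 - (8/3)*x t 2)) atTop (𝓝 0) := by
    have h1 : Tendsto (fun t => 10*(x t 1 - x t 0)*(ρ - 1 - x t 2)) atTop (𝓝 0) := by
      apply squeeze_zero_norm' (a := fun t => 10*(|ρ - 1| + B) * |x t 1 - x t 0|)
      · filter_upwards [eventually_ge_atTop (0:ℝ)] with t ht
        obtain ⟨b1, b2, b3⟩ := hB t ht
        have hz1 : |ρ - 1 - x t 2| ≤ |ρ - 1| + B := le_trans (abs_sub_le' _ _) (by linarith)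
        rw [Real.norm_eq_abs]
        have h5 : |10*(x t 1 - x t 0)*(ρ - 1 - x t 2)|
            = 10 * |x t 1 - x t 0| * |ρ - 1 - x t 2| := by
          rw [abs_mul, abs_mul, abs_of_nonneg (by norm_num : (0:ℝ) ≤ 10)]
        rw [h5]
        nlinarith [abs_nonneg (x t 1 - x t 0), abs_nonneg (ρ - 1 - x t 2)]
      · have h6 := (hwlim.abs).const_mul (10*(|ρ - 1| + B))
        simpa using h6
    have h2 := h1.sub hp'lim
    rw [sub_zero] at h2
    exact h2.congr (fun t => by ring)
  -- Step 10 : contradiction set-up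
  by_contra hcon
  rw [Metric.tendsto_atTop] at hcon
  push_neg at hcon
  obtain ⟨ε, hε, hfreq⟩ := hcon
  have hfreq' : ∀ n : ℕ, ∃ t, (n:ℝ) ≤ t ∧ ε ≤ Metric.infDist (x t)
      {y : EuclideanSpace ℝ (Fin 3) |
        10 * (y 1 - y 0) = 0 ∧ y 0 * (ρ - y 2) - y 1 = 0 ∧ y 0 * y 1 - (8 / 3) * y 2 = 0} := by
    intro n
    obtain ⟨t, ht, h⟩ := hfreq n
    exact ⟨t, ht, by rwa [Real.dist_eq, sub_zero, abs_of_nonneg Metric.infDist_nonneg] at h⟩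
  choose u hu1 hu2 using hfreq'
  have hu0 : ∀ n, (0:ℝ) ≤ u n := fun n => le_trans (Nat.cast_nonneg n) (hu1 n)
  have hutop : Tendsto u atTop atTop := tendsto_atTop_mono hu1 tendsto_natCast_atTop_atTop
  have hball : ∀ n, x (u n) ∈ Metric.closedBall (0 : EuclideanSpace ℝ (Fin 3))
      (Real.sqrt (3*B^2)) := by
    intro n
    rw [Metric.mem_closedBall, dist_zero_right, EuclideanSpace.norm_eq]
    apply Real.sqrt_le_sqrt
    obtain ⟨b1, b2, b3⟩ := hB (u n) (hu0 n)
    rw [Fin.sum_univ_three]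
    simp only [Real.norm_eq_abs]
    nlinarith [abs_nonneg (x (u n) 0), abs_nonneg (x (u n) 1), abs_nonneg (x (u n) 2)]
  obtain ⟨y, -, ψ, hψmono, hyconv⟩ :=
    tendsto_subseq_of_bounded Metric.isBounded_closedBall hball
  have hstop : Tendsto (fun n => u (ψ n)) atTop atTop := hutop.comp hψmono.tendsto_atTop
  have hyc : ∀ i : Fin 3, Tendsto (fun n => x (u (ψ n)) i) atTop (𝓝 (y i)) := fun i =>
    ((EuclideanSpace.proj i).continuous.tendsto y).comp hyconv
  have hy10 : y 1 - y 0 = 0 :=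
    tendsto_nhds_unique ((hyc 1).sub (hyc 0)) (hwlim.comp hstop)
  have hyp : y 0 * (ρ - 1 - y 2) = 0 :=
    tendsto_nhds_unique ((hyc 0).mul (((tendsto_const_nhds (x := ρ - 1))).sub (hyc 2)))
      (hplim.comp hstop)
  have hyq : y 0 * (y 0 * y 1 - (8/3)*y 2) = 0 :=
    tendsto_nhds_unique ((hyc 0).mul (((hyc 0).mul (hyc 1)).sub ((hyc 2).const_mul (8/3))))
      (hqlim.comp hstop)
  have hyE : y ∈ {y : EuclideanSpace ℝ (Fin 3) |
      10 * (y 1 - y 0) = 0 ∧ y 0 * (ρ - y 2) - y 1 = 0 ∧ y 0 * y 1 - (8 / 3) * y 2 = 0} := by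
    by_cases hy0 : y 0 = 0
    · have hy1 : y 1 = 0 := by linarith
      have hy2 : y 2 = 0 := by
        have hwin : ∀ T : ℝ, 0 ≤ T → |y 2| ≤ Real.exp (-(8/3)*T) * B := by
          intro T hT
          apply le_of_forall_pos_le_add
          intro θ hθ
          have hDpos : (0:ℝ) < 1 + (3/8)*((1+10*T)*(2+10*T)) := by nlinarith
          set θ' := min 1 (θ/(1 + (3/8)*((1+10*T)*(2+10*T)))) with hθ'def
          have hθ'pos : 0 < θ' := lt_min one_pos (by positivity)
          have hθ'1 : θ' ≤ 1 := min_le_left _ _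
          have hθ'D : θ' * (1 + (3/8)*((1+10*T)*(2+10*T))) ≤ θ := by
            have h1 := min_le_right 1 (θ/(1 + (3/8)*((1+10*T)*(2+10*T))))
            calc θ' * (1 + (3/8)*((1+10*T)*(2+10*T)))
                ≤ (θ/(1 + (3/8)*((1+10*T)*(2+10*T)))) * (1 + (3/8)*((1+10*T)*(2+10*T))) :=
                  mul_le_mul_of_nonneg_right h1 hDpos.le
              _ = θ := div_mul_cancel₀ θ (ne_of_gt hDpos)
          obtain ⟨N1, hN1⟩ := Metric.tendsto_atTop.mp hwlim θ' hθ'pos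
          have e1 : ∀ᶠ n in atTop, N1 + T ≤ u (ψ n) :=
            hstop.eventually (eventually_ge_atTop (N1 + T))
          have e2 : ∀ᶠ n in atTop, |x (u (ψ n)) 0| < θ' := by
            have h := hyc 0
            rw [hy0] at h
            obtain ⟨N, hN⟩ := Metric.tendsto_atTop.mp h θ' hθ'pos
            exact eventually_atTop.mpr ⟨N, fun n hn => by
              have := hN n hn; rwa [Real.dist_eq, sub_zero] at this⟩
          have e3 : ∀ᶠ n in atTop, |x (u (ψ n)) 2 - y 2| < θ' := by
            obtain ⟨N, hN⟩ := Metric.tendsto_atTop.mp (hyc 2) θ' hθ'pos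
            exact eventually_atTop.mpr ⟨N, fun n hn => by
              have := hN n hn; rwa [Real.dist_eq] at this⟩
          have e4 : ∀ᶠ n in atTop, T ≤ u (ψ n) := hstop.eventually (eventually_ge_atTop T)
          obtain ⟨n, ⟨⟨g1, g2⟩, g3, g4⟩⟩ := ((e1.and e2).and (e3.and e4)).exists
          have hST : 0 ≤ u (ψ n) - T := by linarith
          have hwS : ∀ t, u (ψ n) - T ≤ t → |x t 1 - x t 0| ≤ θ' := by
            intro t ht'
            have h5 := hN1 t (by linarith)
            rw [Real.dist_eq, sub_zero] at h5
            linarith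
          have hx0win : ∀ t ∈ Set.Icc (u (ψ n) - T) (u (ψ n)), |x t 0| ≤ θ'*(1+10*T) := by
            intro t ht'
            have hd : |x (u (ψ n)) 0 - x t 0| ≤ (10*θ')*(u (ψ n) - t) := by
              apply abs_incr_le ht'.2 (fun s _ => hx1 s)
              intro s hs
              have h5 : |x s 1 - x s 0| ≤ θ' := hwS s (le_trans ht'.1 hs.1)
              rw [abs_mul, abs_of_nonneg (by norm_num : (0:ℝ) ≤ 10)]
              linarith
            have h6 : (10*θ')*(u (ψ n) - t) ≤ 10*θ'*T := by
              have := ht'.1; nlinarith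
            have h7 := abs_sub_abs_le_abs_sub (x t 0) (x (u (ψ n)) 0)
            have h8 : |x t 0 - x (u (ψ n)) 0| = |x (u (ψ n)) 0 - x t 0| := abs_sub_comm _ _
            have h9 : θ'*(1+10*T) = θ' + 10*θ'*T := by ring
            rw [h9]
            linarith
          have hx1win : ∀ t ∈ Set.Icc (u (ψ n) - T) (u (ψ n)), |x t 1| ≤ θ'*(2+10*T) := by
            intro t ht'
            have h5 := hwS t ht'.1
            have h6 := hx0win t ht'
            have h7 := abs_sub_abs_le_abs_sub (x t 1) (x t 0)
            have h9 : θ'*(2+10*T) = θ'*(1+10*T) + θ' := by ring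
            rw [h9]
            linarith
          set μ := (θ'*(1+10*T))*(θ'*(2+10*T)) with hμdef
          have hμ0 : (0:ℝ) ≤ μ := by positivity
          have hμb : ∀ t ∈ Set.Icc (u (ψ n) - T) (u (ψ n)), |x t 0 * x t 1| ≤ μ :=
            fun t ht' => abs_mul_le (hx0win t ht') (hx1win t ht') (by positivity)
          have he : ∀ t : ℝ, HasDerivAt (fun s : ℝ => Real.exp ((8/3)*s))
              (Real.exp ((8/3)*t)*(8/3)) t := by
            intro t
            have := ((hasDerivAt_id t).const_mul (8/3:ℝ)).exp
            simpa using this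
          have hF : ∀ t, HasDerivAt (fun s => Real.exp ((8/3)*s) * x s 2)
              (Real.exp ((8/3)*t) * (x t 0 * x t 1)) t := by
            intro t
            have := (he t).mul (hx3 t)
            refine this.congr_deriv ?_
            ring
          have hup := incr_le (c := 0)
            (by linarith : u (ψ n) - T ≤ u (ψ n))
            (f := fun s => Real.exp ((8/3)*s) * x s 2 - (3/8)*μ*Real.exp ((8/3)*s))
            (f' := fun t => Real.exp ((8/3)*t) * (x t 0 * x t 1)
              - (3/8)*μ*(Real.exp ((8/3)*t)*(8/3)))
            (fun t _ => (hF t).sub ((he t).const_mul ((3/8)*μ)))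
            (by
              intro t ht'
              have h5 := (abs_le.1 (hμb t ht')).2
              have hexp := Real.exp_pos ((8/3)*t)
              have he9 : Real.exp ((8/3)*t) * (x t 0 * x t 1)
                  - (3/8)*μ*(Real.exp ((8/3)*t)*(8/3))
                  = Real.exp ((8/3)*t) * (x t 0 * x t 1 - μ) := by ring
              show Real.exp ((8/3)*t) * (x t 0 * x t 1)
                  - (3/8)*μ*(Real.exp ((8/3)*t)*(8/3)) ≤ 0
              rw [he9]
              have := mul_le_mul_of_nonneg_left
                (show x t 0 * x t 1 - μ ≤ 0 by linarith) hexp.le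
              simpa using this)
          have hlo := incr_ge (c := 0)
            (by linarith : u (ψ n) - T ≤ u (ψ n))
            (f := fun s => Real.exp ((8/3)*s) * x s 2 + (3/8)*μ*Real.exp ((8/3)*s))
            (f' := fun t => Real.exp ((8/3)*t) * (x t 0 * x t 1)
              + (3/8)*μ*(Real.exp ((8/3)*t)*(8/3)))
            (fun t _ => (hF t).add ((he t).const_mul ((3/8)*μ)))
            (by
              intro t ht'
              have h5 := (abs_le.1 (hμb t ht')).1
              have hexp := Real.exp_pos ((8/3)*t)
              have he9 : Real.exp ((8/3)*t) * (x t 0 * x t 1)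
                  + (3/8)*μ*(Real.exp ((8/3)*t)*(8/3))
                  = Real.exp ((8/3)*t) * (x t 0 * x t 1 + μ) := by ring
              show (0:ℝ) ≤ Real.exp ((8/3)*t) * (x t 0 * x t 1)
                  + (3/8)*μ*(Real.exp ((8/3)*t)*(8/3))
              rw [he9]
              have := mul_le_mul_of_nonneg_left
                (show (0:ℝ) ≤ x t 0 * x t 1 + μ by linarith) hexp.le
              simpa using this)
          simp only at hup hlo
          rw [zero_mul] at hup hlo
          have heq : Real.exp ((8/3)*(u (ψ n) - T))
              = Real.exp ((8/3)*(u (ψ n))) * Real.exp (-(8/3)*T) := by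
            rw [← Real.exp_add]; ring_nf
          have hepos := Real.exp_pos ((8/3)*(u (ψ n)))
          have heT := Real.exp_pos (-(8/3)*T)
          have hb3 := hB (u (ψ n) - T) hST
          have hx2b := (abs_le.1 hb3.2.2).2
          have hx2b' := (abs_le.1 hb3.2.2).1
          rw [heq] at hup hlo
          have hupper : x (u (ψ n)) 2 ≤ Real.exp (-(8/3)*T)*B + (3/8)*μ := by
            have key : Real.exp ((8/3)*(u (ψ n))) * x (u (ψ n)) 2
                ≤ Real.exp ((8/3)*(u (ψ n))) * (Real.exp (-(8/3)*T)*B + (3/8)*μ) := by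
              nlinarith [hup,
                mul_le_mul_of_nonneg_left hx2b (mul_pos hepos heT).le,
                mul_nonneg (mul_nonneg hμ0 hepos.le) heT.le]
            exact le_of_mul_le_mul_left key hepos
          have hlower : -(Real.exp (-(8/3)*T)*B + (3/8)*μ) ≤ x (u (ψ n)) 2 := by
            have key : Real.exp ((8/3)*(u (ψ n))) * (-(Real.exp (-(8/3)*T)*B + (3/8)*μ))
                ≤ Real.exp ((8/3)*(u (ψ n))) * x (u (ψ n)) 2 := by
              nlinarith [hlo,
                mul_le_mul_of_nonneg_left hx2b' (mul_pos hepos heT).le,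
                mul_nonneg (mul_nonneg hμ0 hepos.le) heT.le]
            exact le_of_mul_le_mul_left key hepos
          have habs2 : |x (u (ψ n)) 2| ≤ Real.exp (-(8/3)*T)*B + (3/8)*μ :=
            abs_le.mpr ⟨hlower, hupper⟩
          have h17 : |y 2| ≤ |x (u (ψ n)) 2| + θ' := by
            have h18 := abs_sub_abs_le_abs_sub (y 2) (x (u (ψ n)) 2)
            have h19 : |y 2 - x (u (ψ n)) 2| = |x (u (ψ n)) 2 - y 2| := abs_sub_comm _ _
            linarith
          have h20 : (3/8)*μ + θ' ≤ θ := by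
            have h21 : μ ≤ θ'*((1+10*T)*(2+10*T)) := by
              rw [hμdef]
              have h22 : (0:ℝ) ≤ θ' - θ'*θ' := by nlinarith
              have h23 : (0:ℝ) ≤ (1+10*T)*(2+10*T) := by nlinarith
              nlinarith [mul_nonneg h22 h23]
            nlinarith [hθ'D]
          linarith
        have hlim0 : Tendsto (fun T : ℝ => Real.exp (-(8/3)*T) * B) atTop (𝓝 0) := by
          have h1 : Tendsto (fun T : ℝ => -(8/3)*T) atTop atBot :=
            Tendsto.const_mul_atTop_of_neg (by norm_num) tendsto_id
          have h2 := Real.tendsto_exp_atBot.comp h1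
          simpa using h2.mul_const B
        have h22 : |y 2| ≤ 0 := ge_of_tendsto hlim0
          (eventually_atTop.mpr ⟨0, fun T hT => hwin T hT⟩)
        exact abs_eq_zero.mp (le_antisymm h22 (abs_nonneg _))
      exact ⟨by rw [hy0, hy1]; ring, by rw [hy0, hy1]; ring, by rw [hy0, hy1, hy2]; ring⟩
    · refine ⟨by rw [hy10, mul_zero], by linear_combination hyp - hy10, ?_⟩
      rcases mul_eq_zero.mp hyq with h | h
      · exact absurd h hy0
      · exact h
  have hdist : Tendsto (fun n => dist (x (u (ψ n))) y) atTop (𝓝 0) :=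
    tendsto_iff_dist_tendsto_zero.mp hyconv
  have hge : ε ≤ 0 := ge_of_tendsto hdist (Eventually.of_forall
    (fun n => le_trans (hu2 (ψ n)) (Metric.infDist_le_dist_of_mem hyE)))
  linarith
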